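/- For every integer n ≥ 2, the polynomial p_n(x) = x^{2n} - 2(x + x^2 + ... + x^{2n-1}) + 1 has exactly one root of absolute value strictly greater than 1 (counted with multiplicity), and that root is real and greater than 1. -/

import Mathlib

open Polynomial Finset

lemma sumIcc_mul {R : Type*} [CommRing R] (z : R) (m : ℕ) :
    (z - 1) * ∑ j ∈ Finset.Icc 1 m, z ^ j = z ^ (m + 1) - z := by
  induction m with
  | zero => simp
  | succ m ih =>
    rw [Finset.sum_Icc_succ_top (by omega), mul_add, ih]
    ring

lemma evalP (n : ℕ) (z : ℂ) :
    ((X ^ (2*n) - 2*∑ j ∈ Finset.Icc 1 (2*n-1), X ^ j + 1 : ℤ[X]).map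
      (Int.castRingHom ℂ)).eval z = z^(2*n) - 2*∑ j ∈ Finset.Icc 1 (2*n-1), z^j + 1 := by
  simp [Polynomial.map_sum, eval_finset_sum]

noncomputable def Q (n : ℕ) : ℂ[X] :=
  (X ^ (2*n) - 2*∑ j ∈ Finset.Icc 1 (2*n-1), X ^ j + 1 : ℤ[X]).map (Int.castRingHom ℂ)

lemma Q_eq (n : ℕ) : Q n = X ^ (2*n) + (1 - 2*∑ j ∈ Finset.Icc 1 (2*n-1), (X:ℂ[X]) ^ j) := by
  unfold Q
  simp [Polynomial.map_sum]
  ring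

lemma lowdeg (n : ℕ) (hn : 1 ≤ n) :
    (1 - 2*∑ j ∈ Finset.Icc 1 (2*n-1), (X:ℂ[X]) ^ j).degree < (2*n : ℕ) := by
  apply lt_of_le_of_lt (b := ((2*n-1 : ℕ) : WithBot ℕ))
  · rw [← Polynomial.natDegree_le_iff_degree_le]
    apply le_trans (Polynomial.natDegree_sub_le _ _)
    simp only [Polynomial.natDegree_one]
    apply max_le (by omega)
    apply le_trans (Polynomial.natDegree_mul_le)
    have : (∑ j ∈ Finset.Icc 1 (2*n-1), (X:ℂ[X]) ^ j).natDegree ≤ 2*n-1 := by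
      apply Polynomial.natDegree_sum_le_of_forall_le
      intro i hi
      simp only [Polynomial.natDegree_X_pow]
      exact (Finset.mem_Icc.mp hi).2
    simpa using this
  · exact_mod_cast Nat.sub_lt (by omega) one_pos

lemma Q_monic (n : ℕ) (hn : 1 ≤ n) : (Q n).Monic := by
  rw [Q_eq]
  exact Polynomial.monic_X_pow_add (lowdeg n hn)

lemma Q_natDegree (n : ℕ) (hn : 1 ≤ n) : (Q n).natDegree = 2*n := by
  rw [Q_eq]
  have := Polynomial.degree_add_eq_left_of_degree_lt (p := (X:ℂ[X]) ^ (2*n))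
    (q := 1 - 2*∑ j ∈ Finset.Icc 1 (2*n-1), (X:ℂ[X]) ^ j)
    (by rw [Polynomial.degree_X_pow]; exact lowdeg n hn)
  have h2 := congrArg (fun d : WithBot ℕ => d.unbotD 0) this
  simp only [Polynomial.degree_X_pow] at h2
  rw [Polynomial.natDegree, h2]
  rfl

lemma Q_card_roots (n : ℕ) (hn : 1 ≤ n) : Multiset.card (Q n).roots = 2*n := by
  rw [← Q_natDegree n hn]
  exact (Polynomial.splits_iff_card_roots.mp (IsAlgClosed.splits _))

lemma exists_r (n : ℕ) (hn : 2 ≤ n) :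
    ∃ r : ℝ, 1 < r ∧ r < 3 ∧ r^(2*n) - 2*∑ j ∈ Finset.Icc 1 (2*n-1), r^j + 1 = 0 := by
  set f : ℝ → ℝ := fun x => x^(2*n) - 2*∑ j ∈ Finset.Icc 1 (2*n-1), x^j + 1 with hf
  have hcont : Continuous f := by
    apply Continuous.add
    apply Continuous.sub (continuous_pow _)
    exact (continuous_const.mul (continuous_finset_sum _ (fun j _ => continuous_pow j)))
    exact continuous_const
  have hf1 : f 1 < 0 := by
    simp only [hf, one_pow, Finset.sum_const, nsmul_eq_mul, mul_one, Nat.card_Icc]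
    have h1 : ((2*n - 1 + 1 - 1 : ℕ) : ℝ) = 2*(n:ℝ) - 1 := by
      push_cast [show 2*n-1+1-1 = 2*n-1 by omega, Nat.cast_sub (show 1 ≤ 2*n by omega)]
      ring
    rw [h1]
    have : (2:ℝ) ≤ n := by exact_mod_cast hn
    nlinarith
  have hf3 : f 3 = 4 := by
    have h := sumIcc_mul (3:ℝ) (2*n-1)
    rw [show 2*n-1+1 = 2*n by omega] at h
    simp only [hf]
    nlinarith [h]
  have h0 : (0:ℝ) ∈ Set.Ioo (f 1) (f 3) := ⟨hf1, by rw [hf3]; norm_num⟩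
  have := intermediate_value_Ioo (by norm_num : (1:ℝ) ≤ 3) hcont.continuousOn h0
  obtain ⟨r, hr, hr0⟩ := this
  exact ⟨r, hr.1, hr.2, hr0⟩

lemma sum_reflect {R : Type*} [CommRing R] (x : R) (m : ℕ) :
    ∑ j ∈ Finset.Icc 1 m, x^(m+1-j) = ∑ j ∈ Finset.Icc 1 m, x^j := by
  apply Finset.sum_nbij' (i := fun j => m+1-j) (j := fun j => m+1-j) <;>
    intro a ha <;> simp only [Finset.mem_Icc] at * <;> omega

lemma recip_root {K : Type*} [Field K] (x : K) (hx : x ≠ 0) (n : ℕ) (hn : 1 ≤ n)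
    (h : x^(2*n) - 2*∑ j ∈ Finset.Icc 1 (2*n-1), x^j + 1 = 0) :
    (x⁻¹)^(2*n) - 2*∑ j ∈ Finset.Icc 1 (2*n-1), (x⁻¹)^j + 1 = 0 := by
  have hxp : x^(2*n) ≠ 0 := pow_ne_zero _ hx
  have key : x^(2*n) * ((x⁻¹)^(2*n) - 2*∑ j ∈ Finset.Icc 1 (2*n-1), (x⁻¹)^j + 1)
      = x^(2*n) - 2*∑ j ∈ Finset.Icc 1 (2*n-1), x^j + 1 := by
    have h1 : x^(2*n) * (x⁻¹)^(2*n) = 1 := by rw [← mul_pow, mul_inv_cancel₀ hx, one_pow]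
    have h2 : x^(2*n) * ∑ j ∈ Finset.Icc 1 (2*n-1), (x⁻¹)^j
        = ∑ j ∈ Finset.Icc 1 (2*n-1), x^j := by
      rw [Finset.mul_sum]
      rw [← sum_reflect x (2*n-1)]
      apply Finset.sum_congr rfl
      intro j hj
      simp only [Finset.mem_Icc] at hj
      rw [inv_pow]
      rw [mul_inv_eq_iff_eq_mul₀ (pow_ne_zero _ hx), ← pow_add]
      congr 1
      omega
    calc x^(2*n) * ((x⁻¹)^(2*n) - 2*∑ j ∈ Finset.Icc 1 (2*n-1), (x⁻¹)^j + 1)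
        = x^(2*n) * (x⁻¹)^(2*n) - 2*(x^(2*n) * ∑ j ∈ Finset.Icc 1 (2*n-1), (x⁻¹)^j)
          + x^(2*n) := by ring
      _ = 1 - 2*∑ j ∈ Finset.Icc 1 (2*n-1), x^j + x^(2*n) := by rw [h1, h2]
      _ = x^(2*n) - 2*∑ j ∈ Finset.Icc 1 (2*n-1), x^j + 1 := by ring
  rw [h] at key
  exact (mul_eq_zero.mp key).resolve_left hxp

open Complex in
lemma Emul (s t : ℝ) : Complex.exp (s*I) * Complex.exp (t*I) = Complex.exp (((s+t:ℝ))*I) := by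
  rw [← Complex.exp_add]; congr 1; push_cast; ring

open Complex in
lemma Epow (t : ℝ) (k : ℕ) : Complex.exp (t*I) ^ k = Complex.exp (((k*t:ℝ))*I) := by
  rw [← Complex.exp_nat_mul]; congr 1; push_cast; ring

open Complex in
lemma sin_exp (x : ℝ) : (Real.sin x : ℂ) = (Complex.exp ((-x:ℝ)*I) - Complex.exp (x*I)) * I / 2 := by
  rw [Complex.ofReal_sin]
  rw [show Complex.sin x = ((Complex.exp (-x * I) - Complex.exp (x * I)) * I) / 2 from rfl]
  norm_num

open Complex in
lemma key_exp (n : ℕ) (hn : 1 ≤ n) (φ : ℝ) :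
    Complex.exp ((2*φ:ℝ)*I) ^ (2*n+1) - 3*Complex.exp ((2*φ:ℝ)*I)^(2*n)
      + 3*Complex.exp ((2*φ:ℝ)*I) - 1
    = Complex.exp ((((2*(n:ℝ)+1)*φ : ℝ))*I) * (2*I) *
        ((Real.sin ((2*(n:ℝ)+1)*φ) : ℂ) - 3*(Real.sin ((2*(n:ℝ)-1)*φ) : ℂ)) := by
  set c := (n:ℝ) with hc
  have hc1 : (1:ℝ) ≤ c := by rw [hc]; exact_mod_cast hn
  set a := (2*c+1)*φ with ha
  set b := (2*c-1)*φ with hb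
  have h1 : Complex.exp ((2*φ:ℝ)*I) ^ (2*n+1) = Complex.exp ((a:ℝ)*I) * Complex.exp ((a:ℝ)*I) := by
    rw [Epow, Emul]; congr 2; push_cast [ha, hc]; ring
  have h2 : Complex.exp ((2*φ:ℝ)*I) ^ (2*n) = Complex.exp ((a:ℝ)*I) * Complex.exp ((b:ℝ)*I) := by
    rw [Epow, Emul]; congr 2; push_cast [ha, hb, hc]; ring
  have h3 : Complex.exp ((2*φ:ℝ)*I) = Complex.exp ((a:ℝ)*I) * Complex.exp ((-b:ℝ)*I) := by
    rw [Emul]; congr 2; push_cast [ha, hb, hc]; ring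
  have h4 : Complex.exp ((a:ℝ)*I) * Complex.exp ((-a:ℝ)*I) = 1 := by
    rw [Emul]; norm_num [Complex.exp_zero]
  rw [h1, h2, h3, sin_exp, sin_exp]
  set u := Complex.exp ((a:ℝ)*I)
  set v := Complex.exp ((-a:ℝ)*I)
  set w := Complex.exp ((b:ℝ)*I)
  set w' := Complex.exp ((-b:ℝ)*I)
  linear_combination h4 - (u*v - u^2 - 3*u*w' + 3*u*w) * Complex.I_sq

open Complex in
lemma circle_root (n : ℕ) (hn : 1 ≤ n) (φ : ℝ) (hφ1 : 0 < φ) (hφ2 : φ < Real.pi)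
    (hsin : Real.sin ((2*(n:ℝ)+1)*φ) - 3*Real.sin ((2*(n:ℝ)-1)*φ) = 0) :
    (Q n).eval (Complex.exp ((2*φ:ℝ)*I)) = 0 := by
  set z : ℂ := Complex.exp ((2*φ:ℝ)*I) with hz
  have hzne : z ≠ 1 := by
    rw [hz]
    intro hone
    rw [Complex.exp_eq_one_iff] at hone
    obtain ⟨k, hk⟩ := hone
    have hI : ((2*φ:ℝ) : ℂ) = (k:ℂ) * (2*(Real.pi:ℂ)) := by
      apply mul_right_cancel₀ Complex.I_ne_zero
      rw [hk]; ring
    have hR : (2*φ:ℝ) = (k:ℝ) * (2*Real.pi) := by exact_mod_cast hI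
    have hpi := Real.pi_pos
    rcases lt_trichotomy k 0 with h|h|h
    · have : (k:ℝ) ≤ -1 := by exact_mod_cast (show k ≤ -1 by omega)
      nlinarith
    · subst h; simp at hR; nlinarith
    · have : (1:ℝ) ≤ (k:ℝ) := by exact_mod_cast h
      nlinarith
  have hq : (z - 1) * (z^(2*n) - 2*∑ j ∈ Finset.Icc 1 (2*n-1), z^j + 1)
      = z^(2*n+1) - 3*z^(2*n) + 3*z - 1 := by
    have hs := sumIcc_mul z (2*n-1)
    rw [show 2*n-1+1 = 2*n by omega] at hs
    linear_combination (-2 : ℂ) * hs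
  have hk := key_exp n hn φ
  rw [show ((Real.sin ((2*(n:ℝ)+1)*φ) : ℂ) - 3*(Real.sin ((2*(n:ℝ)-1)*φ) : ℂ)) = 0 by
    exact_mod_cast congrArg (fun x : ℝ => (x:ℂ)) hsin, mul_zero] at hk
  rw [← hz] at hk
  rw [hq.symm] at hk  -- hk : (z-1) * p(z) = 0
  have hp : z^(2*n) - 2*∑ j ∈ Finset.Icc 1 (2*n-1), z^j + 1 = 0 := by
    rcases mul_eq_zero.mp hk with h|h
    · exact absurd (sub_eq_zero.mp h) hzne
    · exact h
  show (Q n).eval z = 0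
  rw [Q]
  rw [evalP]
  exact hp

noncomputable def hf (n : ℕ) (φ : ℝ) : ℝ :=
  Real.sin ((2*(n:ℝ)+1)*φ) - 3*Real.sin ((2*(n:ℝ)-1)*φ)

lemma hf_cont (n : ℕ) : Continuous (hf n) := by
  unfold hf; fun_prop

lemma node_val (n k : ℕ) (hn : 2 ≤ n) :
    hf n ((k*Real.pi)/(2*(n:ℝ)-1))
      = (-1)^k * Real.sin (2*k*Real.pi/(2*(n:ℝ)-1)) := by
  have hc : (2:ℝ) ≤ (n:ℝ) := by exact_mod_cast hn
  have hden : (2*(n:ℝ)-1) ≠ 0 := by nlinarith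
  have e1 : (2*(n:ℝ)+1)*((k*Real.pi)/(2*(n:ℝ)-1))
      = 2*k*Real.pi/(2*(n:ℝ)-1) + ((k:ℤ):ℝ)*Real.pi := by
    push_cast; field_simp; ring
  have e2 : (2*(n:ℝ)-1)*((k*Real.pi)/(2*(n:ℝ)-1)) = (k:ℝ)*Real.pi := by
    field_simp
  rw [hf, e1, e2, Real.sin_add_int_mul_pi, Real.sin_nat_mul_pi]
  simp only [zpow_natCast]
  push_cast
  ring

lemma node_pi2 (n : ℕ) : hf n (Real.pi/2) = 4*(-1)^n := by
  have e1 : (2*(n:ℝ)+1)*(Real.pi/2) = Real.pi/2 + ((n:ℤ):ℝ)*Real.pi := by push_cast; ring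
  have e2 : (2*(n:ℝ)-1)*(Real.pi/2) = -(Real.pi/2) + ((n:ℤ):ℝ)*Real.pi := by push_cast; ring
  rw [hf, e1, e2, Real.sin_add_int_mul_pi, Real.sin_add_int_mul_pi, Real.sin_neg,
    Real.sin_pi_div_two]
  simp only [zpow_natCast]
  push_cast
  ring

noncomputable def sfun (n i : ℕ) : ℝ :=
  if i ≤ n-2 then ((i:ℝ)+1)*Real.pi/(2*(n:ℝ)-1)
  else if i = n-1 then Real.pi/2
  else (i:ℝ)*Real.pi/(2*(n:ℝ)-1)

section SSec
variable (n : ℕ) (hn : 2 ≤ n)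

lemma hden (hn : 2 ≤ n) : (0:ℝ) < 2*(n:ℝ)-1 := by
  have : (2:ℝ) ≤ n := by exact_mod_cast hn
  nlinarith

lemma s_pos (i : ℕ) (hn : 2 ≤ n) : 0 < sfun n i := by
  have hd := hden n hn
  have hπ := Real.pi_pos
  unfold sfun
  split_ifs with h1 h2
  · apply div_pos (by positivity) hd
  · positivity
  · have : 1 ≤ i := by omega
    have : (1:ℝ) ≤ i := by exact_mod_cast this
    apply div_pos (by nlinarith) hd

lemma s_lt_pi (i : ℕ) (hn : 2 ≤ n) (hi : i ≤ 2*n-2) : sfun n i < Real.pi := by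
  have hd := hden n hn
  have hπ := Real.pi_pos
  have hc : (2:ℝ) ≤ n := by exact_mod_cast hn
  unfold sfun
  split_ifs with h1 h2
  · rw [div_lt_iff₀ hd]
    have : (i:ℝ) + 2 ≤ n := by exact_mod_cast (show i + 2 ≤ n by omega)
    nlinarith
  · nlinarith
  · rw [div_lt_iff₀ hd]
    have : (i:ℝ) + 2 ≤ 2*(n:ℝ) := by exact_mod_cast (show (i:ℕ) + 2 ≤ 2*n by omega)
    nlinarith

lemma s_step (i : ℕ) (hn : 2 ≤ n) (hi : i + 1 ≤ 2*n-2) : sfun n i < sfun n (i+1) := by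
  have hd := hden n hn
  have hπ := Real.pi_pos
  have hc : (2:ℝ) ≤ n := by exact_mod_cast hn
  unfold sfun
  by_cases h1 : i + 1 ≤ n - 2
  · rw [if_pos (by omega), if_pos h1]
    rw [div_lt_div_iff₀ hd hd]
    push_cast
    nlinarith
  · by_cases h2 : i ≤ n - 2
    · -- then i = n-2, i+1 = n-1
      have hieq : i = n - 2 := by omega
      rw [if_pos h2, if_neg h1, if_pos (by omega)]
      rw [div_lt_iff₀ hd]
      have : (i:ℝ) + 2 = n := by exact_mod_cast (show i + 2 = n by omega)
      nlinarith
    · by_cases h3 : i = n - 1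
      · rw [if_neg h2, if_pos h3, if_neg (by omega), if_neg (by omega)]
        rw [lt_div_iff₀ hd]
        have : (n:ℝ) = ((i:ℝ)+1) := by exact_mod_cast (show n = i + 1 by omega)
        push_cast
        nlinarith
      · rw [if_neg h2, if_neg h3, if_neg (by omega), if_neg (by omega)]
        rw [div_lt_div_iff₀ hd hd]
        push_cast
        nlinarith

lemma s_mono (i j : ℕ) (hn : 2 ≤ n) (hij : i < j) (hj : j ≤ 2*n-2) : sfun n i < sfun n j := by
  obtain ⟨m, rfl⟩ : ∃ m, j = i+1+m := ⟨j - (i+1), by omega⟩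
  induction m with
  | zero => exact s_step n i hn (by omega)
  | succ m ih =>
    exact lt_trans (ih (by omega) (by omega)) (s_step n (i+1+m) hn (by omega))

lemma sign_s (i : ℕ) (hn : 2 ≤ n) (hi : i ≤ 2*n-2) :
    0 < (-1:ℝ)^(i+1) * hf n (sfun n i) := by
  have hd := hden n hn
  have hπ := Real.pi_pos
  have hc : (2:ℝ) ≤ n := by exact_mod_cast hn
  by_cases h1 : i ≤ n-2
  · rw [sfun, if_pos h1]
    have hnv := node_val n (i+1) hn
    have ecast : (((i+1:ℕ)):ℝ) = (i:ℝ)+1 := by push_cast; ring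
    rw [ecast] at hnv
    rw [hnv]
    have hsq : (-1:ℝ)^(i+1)*(-1)^(i+1) = 1 := by
      rw [← pow_add]; exact Even.neg_one_pow ⟨i+1, by ring⟩
    rw [← mul_assoc, hsq, one_mul]
    apply Real.sin_pos_of_pos_of_lt_pi
    · apply div_pos (by positivity) hd
    · rw [div_lt_iff₀ hd]
      have : (i:ℝ) + 2 ≤ (n:ℝ) := by exact_mod_cast (show i + 2 ≤ n by omega)
      nlinarith
  · by_cases h2 : i = n-1
    · rw [sfun, if_neg h1, if_pos h2]
      rw [node_pi2 n]
      have hieq : i + 1 = n := by omega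
      rw [hieq]
      have hsq : (-1:ℝ)^n*(-1)^n = 1 := by
        rw [← pow_add]; exact Even.neg_one_pow ⟨n, by ring⟩
      nlinarith [hsq]
    · rw [sfun, if_neg h1, if_neg h2]
      have hni : n ≤ i := by omega
      have hnv := node_val n i hn
      rw [hnv]
      have hodd : (-1:ℝ)^(i+1)*(-1)^i = -1 := by
        rw [← pow_add]
        exact Odd.neg_one_pow ⟨i, by ring⟩
      rw [← mul_assoc, hodd]
      set x : ℝ := 2*(i:ℝ)*Real.pi/(2*(n:ℝ)-1) with hx
      have hsin : Real.sin x = -Real.sin (x - Real.pi) := by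
        have := Real.sin_add_pi (x - Real.pi)
        rw [sub_add_cancel] at this
        linarith [this]
      rw [hsin]
      have hge : (n:ℝ) ≤ (i:ℝ) := by exact_mod_cast hni
      have hle : (i:ℝ) + 2 ≤ 2*(n:ℝ) := by exact_mod_cast (show i + 2 ≤ 2*n by omega)
      have hpos : 0 < Real.sin (x - Real.pi) := by
        apply Real.sin_pos_of_pos_of_lt_pi
        · rw [hx, sub_pos, lt_div_iff₀ hd]; nlinarith
        · rw [hx, sub_lt_iff_lt_add, div_lt_iff₀ hd]; nlinarith
      nlinarith [hpos]

end SSec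

lemma exists_phi (n : ℕ) (hn : 2 ≤ n) (i : ℕ) (hi : i ≤ 2*n-3) :
    ∃ x, (sfun n i < x ∧ x < sfun n (i+1)) ∧ hf n x = 0 := by
  have hstep := s_step n i hn (by omega)
  have hsi := sign_s n i hn (by omega)
  have hsi1 := sign_s n (i+1) hn (by omega)
  rcases Nat.even_or_odd i with he | ho
  · have e1 : (-1:ℝ)^(i+1) = -1 := Odd.neg_one_pow (by simpa using he.add_one)
    have e2 : (-1:ℝ)^(i+1+1) = 1 := Even.neg_one_pow (by simpa using he.add_one.add_one)
    rw [e1] at hsi; rw [e2] at hsi1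
    have hneg : hf n (sfun n i) < 0 := by linarith
    have hpos : 0 < hf n (sfun n (i+1)) := by linarith
    obtain ⟨x, hx1, hx2⟩ := intermediate_value_Ioo hstep.le (hf_cont n).continuousOn
      (Set.mem_Ioo.mpr ⟨hneg, hpos⟩)
    exact ⟨x, hx1, hx2⟩
  · have e1 : (-1:ℝ)^(i+1) = 1 := Even.neg_one_pow (by simpa using ho.add_one)
    have e2 : (-1:ℝ)^(i+1+1) = -1 := Odd.neg_one_pow (by simpa using ho.add_one.add_one)
    rw [e1] at hsi; rw [e2] at hsi1
    have hpos : 0 < hf n (sfun n i) := by linarith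
    have hneg : hf n (sfun n (i+1)) < 0 := by linarith
    obtain ⟨x, hx1, hx2⟩ := intermediate_value_Ioo' hstep.le (hf_cont n).continuousOn
      (Set.mem_Ioo.mpr ⟨hneg, hpos⟩)
    exact ⟨x, hx1, hx2⟩

lemma exists_phi_fun (n : ℕ) (hn : 2 ≤ n) :
    ∃ φ : ℕ → ℝ, ∀ i, i ≤ 2*n-3 →
      (sfun n i < φ i ∧ φ i < sfun n (i+1)) ∧ hf n (φ i) = 0 := by
  have H : ∀ i, ∃ x, i ≤ 2*n-3 → ((sfun n i < x ∧ x < sfun n (i+1)) ∧ hf n x = 0) := by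
    intro i
    by_cases hi : i ≤ 2*n-3
    · obtain ⟨x, h⟩ := exists_phi n hn i hi; exact ⟨x, fun _ => h⟩
    · exact ⟨0, fun h => absurd h hi⟩
  choose φ hφ using H
  exact ⟨φ, fun i hi => hφ i hi⟩

open Complex in
lemma exp_inj_angle (a b : ℝ) (ha1 : 0 < a) (ha2 : a < 2*Real.pi) (hb1 : 0 < b)
    (hb2 : b < 2*Real.pi) (h : Complex.exp ((a:ℝ)*I) = Complex.exp ((b:ℝ)*I)) : a = b := by
  rw [Complex.exp_eq_exp_iff_exists_int] at h
  obtain ⟨k, hk⟩ := h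
  have hI : ((a:ℝ):ℂ) = (b:ℂ) + (k:ℂ)*(2*(Real.pi:ℂ)) := by
    apply mul_right_cancel₀ Complex.I_ne_zero
    rw [hk]; push_cast; ring
  have hR : a = b + (k:ℝ)*(2*Real.pi) := by exact_mod_cast hI
  have hpi := Real.pi_pos
  rcases lt_trichotomy k 0 with h'|h'|h'
  · have : (k:ℝ) ≤ -1 := by exact_mod_cast (show k ≤ -1 by omega)
    nlinarith
  · subst h'; simpa using hR
  · have : (1:ℝ) ≤ (k:ℝ) := by exact_mod_cast h'
    nlinarith

open Complex in
theorem unique_large_root (n : ℕ) (hn : 2 ≤ n) :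
    ∃ r : ℝ, 1 < r ∧
      (((X ^ (2 * n) - 2 * ∑ j ∈ Finset.Icc 1 (2 * n - 1), X ^ j + 1 : ℤ[X])).map
          (Int.castRingHom ℂ)).roots.filter (fun z => 1 < ‖z‖) = {(r : ℂ)} := by
  obtain ⟨r, hr1, hr3, hr0⟩ := exists_r n hn
  refine ⟨r, hr1, ?_⟩
  have hn1 : 1 ≤ n := by omega
  have hrpos : (0:ℝ) < r := by linarith
  have hQr : (Q n).eval ((r:ℝ):ℂ) = 0 := by
    rw [Q, evalP]
    exact_mod_cast hr0
  have hrinv := recip_root r (ne_of_gt hrpos) n hn1 hr0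
  have hQrinv : (Q n).eval ((r⁻¹:ℝ):ℂ) = 0 := by
    rw [Q, evalP]
    exact_mod_cast hrinv
  obtain ⟨φ, hφ⟩ := exists_phi_fun n hn
  have hφpos : ∀ i, i ≤ 2*n-3 → 0 < φ i :=
    fun i hi => lt_trans (s_pos n i hn) (hφ i hi).1.1
  have hφlt : ∀ i, i ≤ 2*n-3 → φ i < Real.pi :=
    fun i hi => lt_trans (hφ i hi).1.2 (s_lt_pi n (i+1) hn (by omega))
  have hφmono : ∀ i j, i ≤ 2*n-3 → j ≤ 2*n-3 → i < j → φ i < φ j := by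
    intro i j hi hj hij
    have h1 : φ i < sfun n (i+1) := (hφ i hi).1.2
    have h2 : sfun n j < φ j := (hφ j hj).1.1
    rcases eq_or_lt_of_le (show i+1 ≤ j by omega) with he | hl
    · rw [he] at h1; linarith
    · exact lt_trans h1 (lt_trans (s_mono n (i+1) j hn hl (by omega)) h2)
  set z : ℕ → ℂ := fun i => Complex.exp (((2*φ i : ℝ))*I) with hzdef
  have hzroot : ∀ i, i ≤ 2*n-3 → (Q n).eval (z i) = 0 := by
    intro i hi
    exact circle_root n hn1 (φ i) (hφpos i hi) (hφlt i hi)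
      (by have := (hφ i hi).2; rwa [hf] at this)
  have hzabs : ∀ i, ‖z i‖ = 1 := fun i => Complex.norm_exp_ofReal_mul_I _
  have hπ := Real.pi_pos
  have hzinj : ∀ i j, i ≤ 2*n-3 → j ≤ 2*n-3 → z i = z j → i = j := by
    intro i j hi hj hzz
    have heq2 : 2*φ i = 2*φ j := by
      apply exp_inj_angle _ _ (by linarith [hφpos i hi]) (by linarith [hφlt i hi])
        (by linarith [hφpos j hj]) (by linarith [hφlt j hj])
      exact hzz
    have hφeq : φ i = φ j := by linarith
    rcases lt_trichotomy i j with h'|h'|h'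
    · exact absurd hφeq (ne_of_lt (hφmono i j hi hj h'))
    · exact h'
    · exact absurd hφeq.symm (ne_of_lt (hφmono j i hj hi h'))
  set T : Multiset ℂ := (r:ℂ) ::ₘ ((r⁻¹:ℝ):ℂ) ::ₘ (Multiset.range (2*n-2)).map z with hT
  have hcardT : Multiset.card T = 2*n := by
    simp [hT]; omega
  have hQne : Q n ≠ 0 := (Q_monic n hn1).ne_zero
  have hrinv_lt : r⁻¹ < 1 := by
    rw [inv_lt_one_iff₀]; right; exact hr1
  have hrinvpos : 0 < r⁻¹ := by positivity
  have habs_r : ‖((r:ℝ):ℂ)‖ = r := by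
    rw [Complex.norm_real, Real.norm_eq_abs]; exact abs_of_pos hrpos
  have habs_rinv : ‖(((r⁻¹:ℝ)):ℂ)‖ = r⁻¹ := by
    rw [Complex.norm_real, Real.norm_eq_abs]; exact abs_of_pos hrinvpos
  have hsub : T ⊆ (Q n).roots := by
    intro a ha
    rw [Polynomial.mem_roots hQne]
    simp only [hT, Multiset.mem_cons, Multiset.mem_map, Multiset.mem_range] at ha
    rcases ha with rfl | rfl | ⟨i, hi, rfl⟩
    · exact hQr
    · exact hQrinv
    · exact hzroot i (by omega)
  have hnodupT : T.Nodup := by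
    rw [hT, Multiset.nodup_cons, Multiset.nodup_cons]
    refine ⟨?_, ?_, ?_⟩
    · simp only [Multiset.mem_cons, Multiset.mem_map, Multiset.mem_range]
      rintro (he | ⟨i, hi, he⟩)
      · have : r = r⁻¹ := by exact_mod_cast he
        nlinarith [mul_inv_cancel₀ (ne_of_gt hrpos)]
      · have := congrArg norm he
        rw [habs_r, hzabs] at this
        linarith
    · simp only [Multiset.mem_map, Multiset.mem_range]
      rintro ⟨i, hi, he⟩
      have := congrArg norm he
      rw [habs_rinv, hzabs] at this
      linarith
    · apply Multiset.Nodup.map_on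
      · intro i hi j hj hij
        rw [Multiset.mem_range] at hi hj
        exact hzinj i j (by omega) (by omega) hij
      · exact Multiset.nodup_range _
  have hle : T ≤ (Q n).roots := (Multiset.le_iff_subset hnodupT).mpr hsub
  have heq : (Q n).roots = T :=
    (Multiset.eq_of_le_of_card_le hle (by rw [hcardT, Q_card_roots n hn1])).symm
  rw [show ((X ^ (2 * n) - 2 * ∑ j ∈ Finset.Icc 1 (2 * n - 1), X ^ j + 1 : ℤ[X])).map
      (Int.castRingHom ℂ) = Q n from rfl]
  rw [heq, hT]
  rw [Multiset.filter_cons_of_pos _ (by rw [habs_r]; exact hr1)]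
  rw [Multiset.filter_cons_of_neg _ (by rw [habs_rinv]; exact not_lt.mpr hrinv_lt.le)]
  have hfilt : Multiset.filter (fun w => 1 < ‖w‖) ((Multiset.range (2*n-2)).map z) = 0 := by
    rw [Multiset.filter_eq_nil]
    intro a ha
    rw [Multiset.mem_map] at ha
    obtain ⟨i, _, rfl⟩ := ha
    rw [hzabs]
    norm_num
  rw [hfilt]
  rfl
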